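/- Let ν be a measure on ℝ and let p : ℕ → ℝ → ℝ be a sequence of measurable functions, each square-integrable with respect to ν, satisfying the orthonormality relations ∫_ℝ p k (t) · p l (t) dν(t) = 1 if k = l and 0 otherwise. Let n ≥ 1 and let A_n denote the alternating group of even permutations of Fin n. For m : Fin n → ℕ define the W_e-symmetric polynomial p^sym_m(x) = ∑_{σ ∈ A_n} ∏_i p (m (σ⁻¹ i)) (x i) for x : Fin n → ℝ. Then for all m, m' : Fin n → ℕ, ∫_{x : Fin n → ℝ} p^sym_m(x) · p^sym_{m'}(x) d(ν^{⊗n})(x) = card {(σ, τ) ∈ A_n × A_n : m ∘ σ = m' ∘ τ}, where ν^{⊗n} is the n-fold product measure. In particular, for m ≠ m' with no pair of even permutations matching them the integral vanishes, so the functions p^sym_m form an orthogonal family. -/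

import Mathlib

open MeasureTheory

/-- `W_e`-symmetrization of a product of one-variable functions:
`p^sym_m(x) = ∑_{σ ∈ Aₙ} ∏ᵢ p (m (σ⁻¹ i)) (x i)`. -/
noncomputable def psym (n : ℕ) (p : ℕ → ℝ → ℝ) (m : Fin n → ℕ) (x : Fin n → ℝ) : ℝ :=
  ∑ σ : alternatingGroup (Fin n), ∏ i, p (m ((σ : Equiv.Perm (Fin n))⁻¹ i)) (x i)

/-- Orthogonality of `W_e`-symmetric polynomials built from an orthonormal family:
the scalar product with respect to the product measure counts the pairs of even
permutations matching the two index vectors. -/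
theorem psym_orthogonality (ν : Measure ℝ) [SigmaFinite ν] (p : ℕ → ℝ → ℝ)
    (hmeas : ∀ k, Measurable (p k)) (hL2 : ∀ k, MemLp (p k) 2 ν)
    (horth : ∀ k l, ∫ t, p k t * p l t ∂ν = if k = l then 1 else 0)
    (n : ℕ) (hn : 1 ≤ n) (m m' : Fin n → ℕ) :
    ∫ x : Fin n → ℝ, psym n p m x * psym n p m' x ∂(Measure.pi fun _ : Fin n => ν) =
      ({q : alternatingGroup (Fin n) × alternatingGroup (Fin n) |
        m ∘ (q.1 : Equiv.Perm (Fin n)) = m' ∘ (q.2 : Equiv.Perm (Fin n))}.ncard : ℝ) := by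
  classical
  letI : MeasureSpace ℝ := ⟨ν⟩
  haveI : SigmaFinite (volume : Measure ℝ) := ‹SigmaFinite ν›
  have hpi : (Measure.pi fun _ : Fin n => ν) = (volume : Measure (Fin n → ℝ)) := rfl
  have hint : ∀ k l : ℕ, Integrable (fun t : ℝ => p k t * p l t) ν := by
    intro k l
    rw [← memLp_one_iff_integrable]
    have h := (hL2 l).smul (hL2 k) (p := 2) (q := 2) (r := 1)
    exact h
  have hintF : ∀ σ τ : Equiv.Perm (Fin n), Integrable
      (fun x : Fin n → ℝ => ∏ i, (p (m (σ⁻¹ i)) (x i) * p (m' (τ⁻¹ i)) (x i))) := by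
    intro σ τ
    exact Integrable.fintype_prod (fun i => hint _ _)
  have key : ∀ σ τ : Equiv.Perm (Fin n),
      ∫ x : Fin n → ℝ, ∏ i, (p (m (σ⁻¹ i)) (x i) * p (m' (τ⁻¹ i)) (x i)) =
        if (∀ i, m (σ⁻¹ i) = m' (τ⁻¹ i)) then (1 : ℝ) else 0 := by
    intro σ τ
    rw [integral_fintype_prod_volume_eq_prod (ι := Fin n)
      (f := fun i t => p (m (σ⁻¹ i)) t * p (m' (τ⁻¹ i)) t)]
    have h1 : ∀ i : Fin n, (∫ t, p (m (σ⁻¹ i)) t * p (m' (τ⁻¹ i)) t) =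
        if m (σ⁻¹ i) = m' (τ⁻¹ i) then (1 : ℝ) else 0 := fun i => horth _ _
    simp_rw [h1]
    rw [Finset.prod_boole]
    simp
  have hexpand : ∀ x : Fin n → ℝ, psym n p m x * psym n p m' x =
      ∑ q : alternatingGroup (Fin n) × alternatingGroup (Fin n),
        ∏ i, (p (m ((q.1 : Equiv.Perm (Fin n))⁻¹ i)) (x i) *
              p (m' ((q.2 : Equiv.Perm (Fin n))⁻¹ i)) (x i)) := by
    intro x
    rw [psym, psym, Fintype.sum_mul_sum, Fintype.sum_prod_type]
    simp_rw [Finset.prod_mul_distrib]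
  rw [hpi]
  simp_rw [hexpand]
  rw [integral_finset_sum _ (fun q _ => hintF _ _)]
  simp_rw [key]
  rw [Finset.sum_boole]
  congr 1
  have hcard : ({q : alternatingGroup (Fin n) × alternatingGroup (Fin n) |
      m ∘ (q.1 : Equiv.Perm (Fin n)) = m' ∘ (q.2 : Equiv.Perm (Fin n))}.ncard) =
      (Finset.univ.filter (fun q : alternatingGroup (Fin n) × alternatingGroup (Fin n) =>
        ∀ i, m ((q.1 : Equiv.Perm (Fin n))⁻¹ i) = m' ((q.2 : Equiv.Perm (Fin n))⁻¹ i))).card := by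
    rw [Set.ncard_eq_toFinset_card', Set.toFinset_setOf]
    refine Finset.card_bij' (fun q _ => (q.1⁻¹, q.2⁻¹)) (fun q _ => (q.1⁻¹, q.2⁻¹)) ?_ ?_ ?_ ?_
    · intro q hq
      simp only [Finset.mem_filter, Finset.mem_univ, true_and] at hq ⊢
      intro i
      simpa using congrFun hq i
    · intro q hq
      simp only [Finset.mem_filter, Finset.mem_univ, true_and] at hq ⊢
      funext j
      simpa using hq j
    · intro q hq; simp
    · intro q hq; simp
  rw [hcard]
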